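/- Degree reduction for the Weierstrass method: let p be a monic polynomial of degree d, and let z ∈ ℂ^d have pairwise distinct entries. If z_k is a root of p for some fixed index k, then the k-th component of W_p(z) equals z_k, and the remaining components of W_p(z) agree with the components of the Weierstrass map of the degree-(d−1) polynomial p(Z)/(Z − z_k) applied to the vector of remaining entries. -/

import Mathlib

open Polynomial Finset

/-- Degree reduction for the Weierstrass method: if `z_k` is a root of the monic
polynomial `p = (X - z_k) * q` and `z` has pairwise distinct entries, then the
`k`-th component of `W_p(z)` is `z_k`, and for `j ≠ k` the `j`-th component of
`W_p(z)` equals the corresponding component of the Weierstrass map of `q`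
applied to the vector of remaining entries. -/
theorem weierstrass_degree_reduction
    (d : ℕ) (p q : Polynomial ℂ) (hmonic : p.Monic) (hdeg : p.natDegree = d)
    (z : Fin d → ℂ) (hz : Function.Injective z) (k : Fin d)
    (hroot : p.eval (z k) = 0)
    (hq : p = (X - C (z k)) * q)
    (W : (Fin d → ℂ) → Fin d → ℂ)
    (hW : ∀ (w : Fin d → ℂ) (i : Fin d),
      W w i = w i - p.eval (w i) / ∏ j ∈ univ.erase i, (w i - w j)) :
    W z k = z k ∧
      ∀ j : Fin d, j ≠ k →
        W z j = z j - q.eval (z j) / ∏ i ∈ (univ.erase j).erase k, (z j - z i) := by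
  constructor
  · rw [hW, hroot, zero_div, sub_zero]
  · intro j hjk
    rw [hW]
    congr 1
    have hkmem : k ∈ univ.erase j := by
      simp [Ne.symm hjk]
    have hprod : ∏ i ∈ univ.erase j, (z j - z i)
        = (z j - z k) * ∏ i ∈ (univ.erase j).erase k, (z j - z i) :=
      (Finset.mul_prod_erase _ _ hkmem).symm
    have hne : z j - z k ≠ 0 := sub_ne_zero.mpr (fun h => hjk (hz h))
    rw [hq, hprod]
    simp only [eval_mul, eval_sub, eval_X, eval_C]
    rw [mul_div_mul_left _ _ hne]
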